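/- arXiv:1611.08296 — 2 statements merged into one kernel-verified Lean document; each statement's English description precedes it below -/
import Mathlib

section
/- Let W act on a torus T of dimension r, let n | n' be positive integers prime to the characteristic, and form the semidirect products W⋉T_n and W⋉T_{n'}. Then the ℚ̄_ℓ-linear map h : ℚ̄_ℓ[W⋉T_n] → ℚ̄_ℓ[W⋉T_{n'}] defined by h(wt) = (n/n')^r Σ_{t' ∈ T_{n'}, t'^{n'/n} = t} wt' is an algebra homomorphism (compatible with multiplication). -/
/-- The subgroup of `m`-torsion points of a commutative group. -/
def torsionSubgroup (G : Type*) [CommGroup G] (m : ℕ) : Subgroup G where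
  carrier := {x | x ^ m = 1}
  one_mem' := by simp
  mul_mem' := by
    intro a b ha hb
    simp only [Set.mem_setOf_eq] at *
    rw [mul_pow, ha, hb, one_mul]
  inv_mem' := by
    intro a ha
    simp only [Set.mem_setOf_eq] at *
    rw [inv_pow, ha, inv_one]

/-- The norm-type map `T_{n'} → T_n`, `t ↦ t^{n'/n}`, for `n ∣ n'`. -/
def powHom {G : Type*} [CommGroup G] (n n' : ℕ) (h : n ∣ n') :
    torsionSubgroup G n' →* torsionSubgroup G n where
  toFun x := ⟨(x : G) ^ (n' / n), by
    have hx : (x : G) ^ n' = 1 := x.2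
    show ((x : G) ^ (n' / n)) ^ n = 1
    rw [← pow_mul, Nat.div_mul_cancel h, hx]⟩
  map_one' := by
    apply Subtype.ext
    simp
  map_mul' := by
    intro a b
    apply Subtype.ext
    simp [mul_pow]

/-- Automorphisms of `G` restrict to automorphisms of the `m`-torsion subgroup. -/
def MulAut.restrictTorsion {G : Type*} [CommGroup G] (m : ℕ) :
    MulAut G →* MulAut (torsionSubgroup G m) where
  toFun f :=
    { toFun := fun x => ⟨f (x : G), by
        show (f (x : G)) ^ m = 1
        rw [← map_pow]
        have hx : (x : G) ^ m = 1 := x.2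
        rw [hx, map_one]⟩
      invFun := fun x => ⟨f.symm (x : G), by
        show (f.symm (x : G)) ^ m = 1
        rw [← map_pow]
        have hx : (x : G) ^ m = 1 := x.2
        rw [hx, map_one]⟩
      left_inv := fun x => Subtype.ext (f.symm_apply_apply _)
      right_inv := fun x => Subtype.ext (f.apply_symm_apply _)
      map_mul' := fun x y => Subtype.ext (map_mul f _ _) }
  map_one' := by
    apply MulEquiv.ext
    intro x
    exact Subtype.ext rfl
  map_mul' := by
    intro f g
    apply MulEquiv.ext
    intro x
    exact Subtype.ext rfl

section Aux

lemma torsionSubgroup_units_eq (k : Type*) [CommMonoid k] (m : ℕ) :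
    torsionSubgroup kˣ m = rootsOfUnity m k := by
  ext x
  exact Iff.rfl

lemma card_torsionSubgroup_units (k : Type*) [Field k] [IsAlgClosed k] (m : ℕ)
    [NeZero (m : k)] : Nat.card (torsionSubgroup kˣ m) = m := by
  have : NeZero m := NeZero.of_neZero_natCast k
  rw [torsionSubgroup_units_eq]
  exact HasEnoughRootsOfUnity.natCard_rootsOfUnity k m

def torsionPiEquiv (G : Type*) [CommGroup G] (r m : ℕ) :
    torsionSubgroup (Fin r → G) m ≃ (Fin r → torsionSubgroup G m) where
  toFun x i := ⟨x.1 i, by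
    have hx : x.1 ^ m = 1 := x.2
    show (x.1 i) ^ m = 1
    exact congrFun hx i⟩
  invFun f := ⟨fun i => (f i).1, funext fun i => (f i).2⟩
  left_inv x := rfl
  right_inv f := rfl

lemma card_torsionSubgroup_pi (k : Type*) [Field k] [IsAlgClosed k] (r m : ℕ)
    [NeZero (m : k)] : Nat.card (torsionSubgroup (Fin r → kˣ) m) = m ^ r := by
  rw [Nat.card_congr (torsionPiEquiv kˣ r m), Nat.card_pi]
  simp [card_torsionSubgroup_units k m]

lemma powHom_surjective (k : Type*) [Field k] [IsAlgClosed k] (r n n' : ℕ)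
    (hdvd : n ∣ n') (hn' : n' ≠ 0) :
    Function.Surjective (powHom (G := Fin r → kˣ) n n' hdvd) := by
  intro x
  set m := n' / n with hmdef
  have hmn : m * n = n' := Nat.div_mul_cancel hdvd
  have hm0 : m ≠ 0 := by
    rintro h
    rw [h, zero_mul] at hmn
    exact hn' hmn.symm
  have hroot : ∀ i : Fin r, ∃ z : k, z ^ m = ((x : Fin r → kˣ) i : k) :=
    fun i => IsAlgClosed.exists_pow_nat_eq _ (Nat.pos_of_ne_zero hm0)
  choose z hz using hroot
  have hz0 : ∀ i, z i ≠ 0 := by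
    intro i h
    apply ((x : Fin r → kˣ) i).ne_zero
    rw [← hz i, h, zero_pow hm0]
  set Y : Fin r → kˣ := fun i => Units.mk0 (z i) (hz0 i) with hY
  have hYm : Y ^ m = (x : Fin r → kˣ) := by
    funext i
    ext
    simpa [hY] using hz i
  have hYmem : Y ∈ torsionSubgroup (Fin r → kˣ) n' := by
    show Y ^ n' = 1
    rw [← hmn, pow_mul, hYm]
    exact x.2
  exact ⟨⟨Y, hYmem⟩, Subtype.ext hYm⟩

lemma card_powHom_fiber (k : Type*) [Field k] [IsAlgClosed k] (r n n' : ℕ)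
    (hdvd : n ∣ n') (hn' : n' ≠ 0) [NeZero ((n' / n : ℕ) : k)]
    (a : torsionSubgroup (Fin r → kˣ) n) :
    Nat.card {t' : torsionSubgroup (Fin r → kˣ) n' // powHom n n' hdvd t' = a}
      = (n' / n) ^ r := by
  obtain ⟨t0, ht0⟩ := powHom_surjective k r n n' hdvd hn' a
  set G := Fin r → kˣ
  set m := n' / n with hmdef
  have hmn : m * n = n' := Nat.div_mul_cancel hdvd
  have ht0' : ((t0 : G)) ^ m = (a : G) := congrArg Subtype.val ht0
  have incl : ∀ y : torsionSubgroup G m, (y : G) ∈ torsionSubgroup G n' := by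
    intro y
    have hy : (y : G) ^ m = 1 := y.2
    show (y : G) ^ n' = 1
    rw [← hmn, pow_mul, hy, one_pow]
  let e : torsionSubgroup G m ≃
      {t' : torsionSubgroup G n' // powHom n n' hdvd t' = a} :=
    { toFun := fun y => ⟨t0 * ⟨(y : G), incl y⟩, by
        apply Subtype.ext
        show ((t0 : G) * (y : G)) ^ m = (a : G)
        have hy : (y : G) ^ m = 1 := y.2
        rw [mul_pow, hy, mul_one, ht0']⟩
      invFun := fun z => ⟨((z.1 : torsionSubgroup G n') : G) * ((t0 : G))⁻¹, by
        have hz : ((z.1 : torsionSubgroup G n') : G) ^ m = (a : G) :=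
          congrArg Subtype.val z.2
        show (((z.1 : torsionSubgroup G n') : G) * ((t0 : G))⁻¹) ^ m = 1
        rw [mul_pow, inv_pow, hz, ht0', mul_inv_cancel]⟩
      left_inv := fun y => by
        apply Subtype.ext
        show ((t0 : G) * (y : G)) * ((t0 : G))⁻¹ = (y : G)
        rw [mul_comm, inv_mul_cancel_left]
      right_inv := fun z => by
        apply Subtype.ext
        apply Subtype.ext
        show (t0 : G) * (((z.1 : torsionSubgroup G n') : G) * ((t0 : G))⁻¹)
          = ((z.1 : torsionSubgroup G n') : G)
        rw [mul_comm, inv_mul_cancel_right] }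
  rw [Nat.card_congr e.symm]
  exact card_torsionSubgroup_pi k r m

lemma finsuppSum_smul_mul {M N L : Type*} [Monoid M] [Monoid N] [CommRing L]
    (f : M → MonoidAlgebra L N) (hf : ∀ g g', f (g * g') = f g * f g')
    (a b : MonoidAlgebra L M) :
    Finsupp.sum (a * b).coeff (fun g c => c • f g)
      = Finsupp.sum a.coeff (fun g c => c • f g) * Finsupp.sum b.coeff (fun g c => c • f g) := by
  have hadd : ∀ x y : MonoidAlgebra L M,
      Finsupp.sum (x + y).coeff (fun g c => c • f g)
        = Finsupp.sum x.coeff (fun g c => c • f g) + Finsupp.sum y.coeff (fun g c => c • f g) :=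
    fun x y => by
      rw [MonoidAlgebra.coeff_add]
      exact Finsupp.sum_add_index' (by simp) (by intro g c d; rw [add_smul])
  have hsingle : ∀ (g : M) (c : L),
      Finsupp.sum (MonoidAlgebra.single g c).coeff (fun g c => c • f g) = c • f g :=
    fun g c => by
      rw [MonoidAlgebra.coeff_single]
      exact Finsupp.sum_single_index (by simp)
  induction a using MonoidAlgebra.induction_linear with
  | zero => simp
  | add x y hx hy => rw [add_mul, hadd, hadd, hx, hy, add_mul]
  | single g c =>
    induction b using MonoidAlgebra.induction_linear with
    | zero => simp
    | add x y hx hy => rw [mul_add, hadd, hadd, hx, hy, mul_add]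
    | single g' d =>
      rw [MonoidAlgebra.single_mul_single, hsingle, hsingle, hsingle, hf,
        smul_mul_smul_comm]

end Aux

/-- With `W` acting on the torus `T ≅ (kˣ)^r` (hence on each torsion subgroup
`T_m`), for `n ∣ n'` prime to the characteristic, the linear map
`h : ℚ̄_ℓ[W⋉T_n] → ℚ̄_ℓ[W⋉T_{n'}]` defined by `h(wt) = (n/n')^r Σ_{t'^{n'/n} = t} wt'`
is compatible with multiplication. -/
theorem group_algebra_transition_multiplicative
    (k : Type*) [Field k] [IsAlgClosed k] (p : ℕ) [Fact p.Prime] (hp : CharP k p)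
    (r n n' : ℕ) (hdvd : n ∣ n') (hpn' : ¬ p ∣ n')
    (W : Type*) [Group W] [Finite W] (φ : W →* MulAut (Fin r → kˣ))
    (L : Type*) [Field L] [CharZero L]
    [Fintype (torsionSubgroup (Fin r → kˣ) n')]
    [DecidableEq (torsionSubgroup (Fin r → kˣ) n)] :
    let Tn := torsionSubgroup (Fin r → kˣ) n
    let Tn' := torsionSubgroup (Fin r → kˣ) n'
    let φn : W →* MulAut Tn := (MulAut.restrictTorsion n).comp φ
    let φn' : W →* MulAut Tn' := (MulAut.restrictTorsion n').comp φ
    let f : (Tn ⋊[φn] W) → MonoidAlgebra L (Tn' ⋊[φn'] W) := fun g =>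
      ((n : L) / (n' : L)) ^ r •
        ∑ t' : Tn', if powHom n n' hdvd t' = g.left then
            MonoidAlgebra.single (⟨t', g.right⟩ : Tn' ⋊[φn'] W) (1 : L)
          else 0
    let h : MonoidAlgebra L (Tn ⋊[φn] W) → MonoidAlgebra L (Tn' ⋊[φn'] W) := fun a =>
      Finsupp.sum a.coeff fun g c => c • f g
    ∀ a b : MonoidAlgebra L (Tn ⋊[φn] W), h (a * b) = h a * h b := by
  intro Tn Tn' φn φn' f h a b
  set G := Fin r → kˣ with hG
  -- numerics
  have hn'0 : n' ≠ 0 := by rintro rfl; exact hpn' (dvd_zero p)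
  have hn0 : n ≠ 0 := by rintro rfl; exact hn'0 (zero_dvd_iff.mp hdvd)
  set m := n' / n with hmdef
  have hmn : m * n = n' := Nat.div_mul_cancel hdvd
  have hm0 : m ≠ 0 := by
    rintro hh; rw [hh, zero_mul] at hmn; exact hn'0 hmn.symm
  have hmd : m ∣ n' := ⟨n, hmn.symm⟩
  haveI : NeZero ((m : ℕ) : k) := ⟨by
    rw [Ne, CharP.cast_eq_zero_iff k p]
    exact fun hpm => hpn' (hpm.trans hmd)⟩
  -- fiber cardinality
  have hcard : ∀ aL : Tn,
      (Finset.univ.filter (fun t' : Tn' => powHom n n' hdvd t' = aL)).card = m ^ r := by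
    intro aL
    have := card_powHom_fiber k r n n' hdvd hn'0 aL
    rwa [Nat.card_eq_fintype_card, Fintype.card_subtype] at this
  -- equivariance of powHom
  have hequiv : ∀ (w : W) (t : Tn'),
      powHom n n' hdvd (φn' w t) = φn w (powHom n n' hdvd t) := by
    intro w t
    apply Subtype.ext
    show (φ w ((t : G))) ^ (n' / n) = φ w ((t : G) ^ (n' / n))
    exact (map_pow (φ w) _ _).symm
  -- key multiplicativity of f
  have key : ∀ g g' : Tn ⋊[φn] W, f (g * g') = f g * f g' := by
    intro g g'
    simp only [f]
    rw [smul_mul_smul_comm]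
    have hs : (∑ t' : Tn', if powHom n n' hdvd t' = g.left then
            MonoidAlgebra.single (⟨t', g.right⟩ : Tn' ⋊[φn'] W) (1 : L) else 0)
        * (∑ s' : Tn', if powHom n n' hdvd s' = g'.left then
            MonoidAlgebra.single (⟨s', g'.right⟩ : Tn' ⋊[φn'] W) (1 : L) else 0)
        = (m ^ r) • ∑ u' : Tn', if powHom n n' hdvd u' = (g * g').left then
            MonoidAlgebra.single (⟨u', (g * g').right⟩ : Tn' ⋊[φn'] W) (1 : L) else 0 := by
      rw [Finset.sum_mul_sum]
      have hterm : ∀ t' : Tn',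
          (∑ s' : Tn',
            (if powHom n n' hdvd t' = g.left then
              MonoidAlgebra.single (⟨t', g.right⟩ : Tn' ⋊[φn'] W) (1 : L) else 0) *
            (if powHom n n' hdvd s' = g'.left then
              MonoidAlgebra.single (⟨s', g'.right⟩ : Tn' ⋊[φn'] W) (1 : L) else 0))
          = if powHom n n' hdvd t' = g.left then
              (∑ u' : Tn', if powHom n n' hdvd u' = (g * g').left then
                MonoidAlgebra.single (⟨u', (g * g').right⟩ : Tn' ⋊[φn'] W) (1 : L) else 0)
            else 0 := by
        intro t'
        by_cases hP : powHom n n' hdvd t' = g.left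
        · rw [if_pos hP, if_pos hP]
          refine Fintype.sum_bijective (fun s' : Tn' => t' * φn' g.right s')
            ((Equiv.mulLeft t').bijective.comp (φn' g.right).bijective) _ _ ?_
          intro s'
          rw [mul_ite, mul_zero, MonoidAlgebra.single_mul_single, mul_one]
          refine if_congr ?_ ?_ rfl
          · constructor
            · intro hQ
              rw [map_mul, hP, hequiv, hQ, SemidirectProduct.mul_left]
            · intro hR
              have h1 : powHom n n' hdvd (t' * φn' g.right s')
                  = g.left * φn g.right (powHom n n' hdvd s') := by
                rw [map_mul, hP, hequiv]
              have h2 : (g * g').left = g.left * φn g.right g'.left :=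
                SemidirectProduct.mul_left g g'
              have h3 : g.left * φn g.right (powHom n n' hdvd s')
                  = g.left * φn g.right g'.left := by
                rw [← h1, ← h2]
                exact hR
              exact (φn g.right).injective (mul_left_cancel h3)
          · congr 1
        · simp only [if_neg hP, zero_mul, Finset.sum_const_zero]
      rw [Finset.sum_congr rfl (fun t' _ => hterm t'), Finset.sum_ite,
        Finset.sum_const, Finset.sum_const_zero, add_zero, hcard g.left]
    rw [hs, ← Nat.cast_smul_eq_nsmul L, smul_smul]
    congr 1
    have hnL : (n : L) ≠ 0 := Nat.cast_ne_zero.mpr hn0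
    have hn'L : (n' : L) ≠ 0 := Nat.cast_ne_zero.mpr hn'0
    have hcast : ((m : ℕ) : L) = (n' : L) / (n : L) := by
      rw [hmdef, Nat.cast_div hdvd hnL]
    have hone : ((n : L) / (n' : L)) ^ r * ((m ^ r : ℕ) : L) = 1 := by
      push_cast [hcast]
      rw [← mul_pow, div_mul_div_comm, mul_comm (n' : L) (n : L),
        div_self (mul_ne_zero hnL hn'L), one_pow]
    rw [mul_assoc, hone, mul_one]
  -- conclude
  simp only [h]
  exact finsuppSum_smul_mul f key a b
end

section
/- Let G be a connected reductive group over an algebraic closure k of F_p, and let G̃ be a group containing G with G̃/G ≅ ℤ, with G̃_s the preimage of s. Suppose for some γ ∈ G̃_1 the map Ad(γ) : G → G is a Frobenius map for an F_q-rational structure on G. Then for every s > 0 and every γ' ∈ G̃_s, the map Ad(γ') : G → G is a Frobenius map for an F_{q^s}-rational structure on G. -/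
/-- Conjugation by `γ ∈ G̃` on the kernel subgroup `G = ker(deg)` (the "Ad(γ)" map). -/
def adKer {Gt : Type*} [Group Gt] (deg : Gt →* Multiplicative ℤ) (γ : Gt)
    (g : deg.ker) : deg.ker :=
  ⟨γ * (g : Gt) * γ⁻¹, by
    have hg : deg (g : Gt) = 1 := g.2
    simp [MonoidHom.mem_ker, hg]⟩

lemma adKer_iterate {Gt : Type*} [Group Gt] (deg : Gt →* Multiplicative ℤ) (γ : Gt)
    (s : ℕ) : (adKer deg γ)^[s] = adKer deg (γ ^ s) := by
  induction s with
  | zero => funext g; ext; simp [adKer]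
  | succ n ih =>
      funext g
      rw [Function.iterate_succ', Function.comp_apply, ih]
      ext
      simp only [adKer]
      group

/-- Let `G̃ ⊇ G` with `G̃/G ≅ ℤ` (realized by `deg : G̃ →* ℤ` with
`G = ker(deg)` and `G̃_s = deg⁻¹(s)`).  Suppose `Frob` is a notion of "Frobenius map for an
`F_m`-rational structure" satisfying Lang's theorem, stability under conjugation by
elements of `G`, and closure of powers.  If for some `γ ∈ G̃_1`, `Ad(γ)` is a Frobenius
map for an `F_q`-structure, then for every `s > 0` and every `γ' ∈ G̃_s`, the map
`Ad(γ')` is a Frobenius map for an `F_{q^s}`-structure. -/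
theorem frobenius_on_all_components
    {Gt : Type*} [Group Gt] (deg : Gt →* Multiplicative ℤ)
    (Frob : ℕ → (deg.ker → deg.ker) → Prop)
    (hlang : ∀ (m : ℕ) (F : deg.ker → deg.ker), Frob m F →
        ∀ g : deg.ker, ∃ x : deg.ker, g = x⁻¹ * F x)
    (hconj : ∀ (m : ℕ) (F : deg.ker → deg.ker) (a : deg.ker), Frob m F →
        Frob m (fun g => a⁻¹ * F (a * g * a⁻¹) * a))
    (hpow : ∀ (m : ℕ) (F : deg.ker → deg.ker) (s : ℕ), 0 < s → Frob m F →
        Frob (m ^ s) (F^[s]))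
    (q : ℕ) (γ : Gt) (hγ : deg γ = Multiplicative.ofAdd 1)
    (hFrob : Frob q (adKer deg γ)) :
    ∀ s : ℕ, 0 < s → ∀ γ' : Gt, deg γ' = Multiplicative.ofAdd (s : ℤ) →
      Frob (q ^ s) (adKer deg γ') := by
  intro s hs γ' hγ'
  have hγs : deg (γ ^ s) = Multiplicative.ofAdd (s : ℤ) := by
    rw [map_pow, hγ, ← ofAdd_nsmul]
    norm_num
  have ha : γ' * (γ ^ s)⁻¹ ∈ deg.ker := by
    simp [MonoidHom.mem_ker, hγ', hγs]
  set A : deg.ker := ⟨γ' * (γ ^ s)⁻¹, ha⟩ with hA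
  have hF' : Frob (q ^ s) ((adKer deg γ)^[s]) := hpow q _ s hs hFrob
  obtain ⟨x, hx⟩ := hlang (q ^ s) _ hF' A
  have hmain := hconj (q ^ s) _ x hF'
  have heq : (fun g => x⁻¹ * (adKer deg γ)^[s] (x * g * x⁻¹) * x) = adKer deg γ' := by
    have hγ'eq : γ' = (x : Gt)⁻¹ * γ ^ s * (x : Gt) := by
      have hxc : (A : Gt) = (x : Gt)⁻¹ * (γ ^ s * (x : Gt) * (γ ^ s)⁻¹) := by
        rw [hx]; simp [adKer_iterate, adKer]
      have h2 := congrArg (· * γ ^ s) hxc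
      simpa [mul_assoc, hA] using h2
    funext g
    ext
    simp [adKer_iterate, adKer, hγ'eq, mul_assoc]
  rw [← heq]
  exact hmain
end
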